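/- arXiv:2007.15995 — 12 statements merged into one kernel-verified Lean document; each statement's English description precedes it below -/
import Mathlib

section
/- Let L be a Hom-Lie algebra (with α satisfying condition (2.1)) and let I be a Hom-ideal of L. If Ann_L(I) = {0}, then I is an essential Hom-ideal of L. -/
/-- A Hom-Lie algebra structure on a vector space `Q` over a field `𝔽`, with the
twisting map `α` additionally satisfying condition (2.1):
`α [x,y] = [α x, y] = [x, α y]`. -/
structure HomLieAlgebra (𝔽 : Type*) [Field 𝔽] (Q : Type*) [AddCommGroup Q] [Module 𝔽 Q] where
  bracket : Q →ₗ[𝔽] Q →ₗ[𝔽] Q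
  alpha : Q →ₗ[𝔽] Q
  skew : ∀ x y, bracket x y = - bracket y x
  jacobi : ∀ x y z, bracket (alpha x) (bracket y z) + bracket (alpha y) (bracket z x)
      + bracket (alpha z) (bracket x y) = 0
  comm₁ : ∀ x y, alpha (bracket x y) = bracket (alpha x) y
  comm₂ : ∀ x y, alpha (bracket x y) = bracket x (alpha y)

namespace HomLieAlgebra

variable {𝔽 : Type*} [Field 𝔽] {Q : Type*} [AddCommGroup Q] [Module 𝔽 Q]
variable (H : HomLieAlgebra 𝔽 Q)

/-- `S` is a Hom-subalgebra: a subspace closed under `α` and the bracket. -/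
def IsSubalgebra (S : Submodule 𝔽 Q) : Prop :=
  (∀ x ∈ S, H.alpha x ∈ S) ∧ ∀ x ∈ S, ∀ y ∈ S, H.bracket x y ∈ S

/-- `I` is a Hom-ideal of the Hom-subalgebra `L`:
a subspace `I ⊆ L` with `α(I) ⊆ I` and `[I, L] ⊆ I`. -/
def IsIdealOf (L I : Submodule 𝔽 Q) : Prop :=
  I ≤ L ∧ (∀ x ∈ I, H.alpha x ∈ I) ∧ ∀ x ∈ I, ∀ y ∈ L, H.bracket x y ∈ I

/-- The α-annihilator of the set `S` inside the subalgebra `M`: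
`Ann_M(S) = {x ∈ M | [x, α(y)] = 0 for all y ∈ S}`. -/
def annIn (M : Submodule 𝔽 Q) (S : Set Q) : Set Q :=
  {x | x ∈ M ∧ ∀ y ∈ S, H.bracket x (H.alpha y) = 0}

/-- `I` is an essential Hom-ideal of `L`: it hits every nonzero Hom-ideal of `L`. -/
def IsEssentialIdealOf (L I : Submodule 𝔽 Q) : Prop :=
  H.IsIdealOf L I ∧ ∀ J : Submodule 𝔽 Q, H.IsIdealOf L J → J ≠ ⊥ → I ⊓ J ≠ ⊥

/-- The Hom-Lie algebra `L` is semiprime: `[I, α(I)] ≠ {0}` for every nonzero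
Hom-ideal `I` of `L`. -/
def IsSemiprimeOn (L : Submodule 𝔽 Q) : Prop :=
  ∀ I : Submodule 𝔽 Q, H.IsIdealOf L I → I ≠ ⊥ →
    ∃ x ∈ I, ∃ y ∈ I, H.bracket x (H.alpha y) ≠ 0

/-- The Hom-Lie algebra `L` is prime: `[I, α(J)] ≠ {0}` for all nonzero
Hom-ideals `I`, `J` of `L`. -/
def IsPrimeOn (L : Submodule 𝔽 Q) : Prop :=
  ∀ I J : Submodule 𝔽 Q, H.IsIdealOf L I → I ≠ ⊥ → H.IsIdealOf L J → J ≠ ⊥ →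
    ∃ x ∈ I, ∃ y ∈ J, H.bracket x (H.alpha y) ≠ 0

/-- The iterated brackets `[[…[[q,x₁],x₂],…],xₙ]` with `xᵢ ∈ L` (including `q` itself). -/
inductive IsWord (L : Submodule 𝔽 Q) (q : Q) : Q → Prop
  | base : IsWord L q q
  | step {p : Q} (x : Q) : IsWord L q p → x ∈ L → IsWord L q (H.bracket p x)

/-- `_L(q)`: the linear span in `Q` of `q` together with all the iterated brackets
`[[…[[q,x₁],x₂],…],xₙ]` with `xᵢ ∈ L`. -/
def wordSpan (L : Submodule 𝔽 Q) (q : Q) : Submodule 𝔽 Q :=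
  Submodule.span 𝔽 {p | H.IsWord L q p}

/-- `(L : q) = {x ∈ L | [x, α(_L(q))] ⊆ L}`, as a subspace of `Q`. -/
def quotIdeal (L : Submodule 𝔽 Q) (q : Q) : Submodule 𝔽 Q where
  carrier := {x | x ∈ L ∧ ∀ p ∈ H.wordSpan L q, H.bracket x (H.alpha p) ∈ L}
  add_mem' := by
    rintro a b ⟨haL, ha⟩ ⟨hbL, hb⟩
    refine ⟨L.add_mem haL hbL, fun p hp => ?_⟩
    rw [map_add, LinearMap.add_apply]
    exact L.add_mem (ha p hp) (hb p hp)
  zero_mem' := ⟨L.zero_mem, fun p _ => by simp⟩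
  smul_mem' := by
    rintro c a ⟨haL, ha⟩
    refine ⟨L.smul_mem c haL, fun p hp => ?_⟩
    rw [map_smul, LinearMap.smul_apply]
    exact L.smul_mem c (ha p hp)

/-- `Q` is an algebra of quotients of its Hom-subalgebra `L`: for all `p, q ∈ Q` with
`p ≠ 0` there is `x ∈ (L : q)` with `[x, α(p)] ≠ 0`. -/
def IsAlgebraOfQuotients (L : Submodule 𝔽 Q) : Prop :=
  ∀ p q : Q, p ≠ 0 → ∃ x ∈ H.quotIdeal L q, H.bracket x (H.alpha p) ≠ 0

/-- `Q` is a weak algebra of quotients of its Hom-subalgebra `L`: for every nonzero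
`q ∈ Q` there is `x ∈ L` with `0 ≠ [x, α(q)] ∈ L`. -/
def IsWeakAlgebraOfQuotients (L : Submodule 𝔽 Q) : Prop :=
  ∀ q : Q, q ≠ 0 → ∃ x ∈ L, H.bracket x (H.alpha q) ≠ 0 ∧ H.bracket x (H.alpha q) ∈ L

/-- `Q` is ideally absorbed into `L`: for every nonzero `q ∈ Q` there is a Hom-ideal `I`
of `L` with `Ann_L(I) = {0}` and `{0} ≠ [I, α(q)] ⊆ L`. -/
def IsIdeallyAbsorbed (L : Submodule 𝔽 Q) : Prop :=
  ∀ q : Q, q ≠ 0 → ∃ I : Submodule 𝔽 Q, H.IsIdealOf L I ∧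
    H.annIn L (I : Set Q) = {0} ∧
    (∃ y ∈ I, H.bracket y (H.alpha q) ≠ 0) ∧
    ∀ y ∈ I, H.bracket y (H.alpha q) ∈ (L : Set Q)

/-- The inner derivation `ad_q : p ↦ [α(q), p]`. -/
def ad (q : Q) : Module.End 𝔽 Q := H.bracket (H.alpha q)

end HomLieAlgebra

/-- If `I` is a Hom-ideal of a Hom-Lie algebra `L` with `Ann_L(I) = {0}`,
then `I` is an essential Hom-ideal of `L`. -/
theorem essential_of_ann_eq_zero
    {𝔽 L : Type*} [Field 𝔽] [AddCommGroup L] [Module 𝔽 L]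
    (H : HomLieAlgebra 𝔽 L) (I : Submodule 𝔽 L) (hI : H.IsIdealOf ⊤ I)
    (hann : H.annIn ⊤ (I : Set L) = {0}) :
    H.IsEssentialIdealOf ⊤ I := by
  refine ⟨hI, fun J hJ hJne hIJ => ?_⟩
  obtain ⟨z, hzJ, hz0⟩ := Submodule.exists_mem_ne_zero_of_ne_bot hJne
  apply hz0
  have hzann : z ∈ H.annIn ⊤ (I : Set L) := by
    refine ⟨Submodule.mem_top, fun y hy => ?_⟩
    have h1 : H.bracket z (H.alpha y) ∈ J := hJ.2.2 z hzJ _ Submodule.mem_top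
    have h2 : H.bracket z (H.alpha y) ∈ I := by
      rw [H.skew]
      exact I.neg_mem (hI.2.2 _ (hI.2.1 y hy) z Submodule.mem_top)
    have : H.bracket z (H.alpha y) ∈ I ⊓ J := ⟨h2, h1⟩
    rwa [hIJ, Submodule.mem_bot] at this
  rw [hann] at hzann
  exact hzann
end

section
/- Let L be a semiprime Hom-Lie algebra (with α satisfying condition (2.1)) and let I be a Hom-ideal of L. Then I ∩ Ann_L(I) = {0}, and I is an essential Hom-ideal of L if and only if Ann_L(I) = {0}. -/
/-- For a semiprime Hom-Lie algebra `L` and a Hom-ideal `I` of `L`, one has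
`I ∩ Ann_L(I) = {0}`, and `I` is essential iff `Ann_L(I) = {0}`. -/
theorem semiprime_inter_ann_and_essential_iff
    {𝔽 L : Type*} [Field 𝔽] [AddCommGroup L] [Module 𝔽 L]
    (H : HomLieAlgebra 𝔽 L) (hsp : H.IsSemiprimeOn ⊤)
    (I : Submodule 𝔽 L) (hI : H.IsIdealOf ⊤ I) :
    (I : Set L) ∩ H.annIn ⊤ (I : Set L) = {0} ∧
    (H.IsEssentialIdealOf ⊤ I ↔ H.annIn ⊤ (I : Set L) = {0}) := by
  obtain ⟨-, hIα, hIbr⟩ := hI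
  -- the "commuting" identity [α x, y] = [x, α y]
  have hcomm : ∀ x y, H.bracket (H.alpha x) y = H.bracket x (H.alpha y) :=
    fun x y => (H.comm₁ x y).symm.trans (H.comm₂ x y)
  -- The annihilator as a submodule
  let A : Submodule 𝔽 L :=
    { carrier := H.annIn ⊤ (I : Set L)
      add_mem' := by
        rintro a b ⟨-, ha⟩ ⟨-, hb⟩
        exact ⟨Submodule.mem_top, fun y hy => by
          rw [map_add, LinearMap.add_apply, ha y hy, hb y hy, add_zero]⟩
      zero_mem' := ⟨Submodule.mem_top, fun y hy => by simp⟩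
      smul_mem' := by
        rintro c a ⟨-, ha⟩
        exact ⟨Submodule.mem_top, fun y hy => by
          rw [map_smul, LinearMap.smul_apply, ha y hy, smul_zero]⟩ }
  have hAmem : ∀ x, x ∈ A ↔ ∀ y ∈ I, H.bracket x (H.alpha y) = 0 := by
    intro x
    constructor
    · rintro ⟨-, hx⟩; exact hx
    · intro hx; exact ⟨Submodule.mem_top, hx⟩
  -- A is a Hom-ideal
  have hAα : ∀ x ∈ A, H.alpha x ∈ A := by
    intro x hx
    rw [hAmem] at hx ⊢
    intro y hy
    rw [← H.comm₁, hx y hy, map_zero]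
  have hAbr : ∀ x ∈ A, ∀ z : L, H.bracket x z ∈ A := by
    intro x hx z
    rw [hAmem] at hx ⊢
    intro y hy
    have hjac := H.jacobi y x z
    have h1 : H.bracket (H.alpha x) (H.bracket z y) = 0 := by
      rw [hcomm, H.skew z y]
      simp [hx _ (hIbr y hy z Submodule.mem_top)]
    have h2 : H.bracket (H.alpha z) (H.bracket y x) = 0 := by
      rw [hcomm, H.comm₁, H.skew (H.alpha y) x, hx y hy]
      simp
    have h3 : H.bracket (H.alpha y) (H.bracket x z) = 0 := by
      have := hjac
      rw [h1, h2] at this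
      simpa using this
    rw [H.skew, h3, neg_zero]
  have hAideal : H.IsIdealOf ⊤ A :=
    ⟨le_top, hAα, fun x hx z _ => hAbr x hx z⟩
  -- I ⊓ A is a Hom-ideal with [J, α J] = 0, hence ⊥ by semiprimeness
  have hJideal : H.IsIdealOf ⊤ (I ⊓ A) := by
    refine ⟨le_top, fun x hx => ⟨hIα x hx.1, hAα x hx.2⟩,
      fun x hx z hz => ⟨hIbr x hx.1 z hz, hAbr x hx.2 z⟩⟩
  have hJbot : I ⊓ A = ⊥ := by
    by_contra hne
    obtain ⟨x, hx, y, hy, hxy⟩ := hsp (I ⊓ A) hJideal hne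
    exact hxy (((hAmem x).1 hx.2) y hy.1)
  have hpart1 : (I : Set L) ∩ H.annIn ⊤ (I : Set L) = {0} := by
    have : (I : Set L) ∩ H.annIn ⊤ (I : Set L) = ((I ⊓ A : Submodule 𝔽 L) : Set L) := rfl
    rw [this, hJbot, Submodule.bot_coe]
  refine ⟨hpart1, ?_, ?_⟩
  · -- essential → Ann = {0}
    rintro ⟨-, hess⟩
    ext x
    simp only [Set.mem_singleton_iff]
    constructor
    · intro hx
      by_contra hx0
      have hAne : A ≠ ⊥ := by
        intro hA
        rw [Submodule.eq_bot_iff] at hA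
        exact hx0 (hA x hx)
      exact hess A hAideal hAne hJbot
    · rintro rfl
      exact A.zero_mem
  · -- Ann = {0} → essential
    intro hann
    refine ⟨⟨le_top, hIα, hIbr⟩, fun J hJ hJne hIJ => ?_⟩
    apply hJne
    rw [Submodule.eq_bot_iff]
    intro x hx
    have hxA : x ∈ H.annIn ⊤ (I : Set L) := by
      refine ⟨Submodule.mem_top, fun y hy => ?_⟩
      have hmem : H.bracket x (H.alpha y) ∈ I ⊓ J := by
        refine ⟨?_, hJ.2.2 x hx (H.alpha y) Submodule.mem_top⟩
        rw [H.skew]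
        exact I.neg_mem (hIbr (H.alpha y) (hIα y hy) x Submodule.mem_top)
      rw [hIJ] at hmem
      exact hmem
    rw [hann] at hxA
    exact hxA
end

section
/- Let L ⊆ Q be an extension of Hom-Lie algebras and let q ∈ Q. Then (L:q) is a Hom-ideal of L, and it is the largest Hom-ideal of L among the Hom-ideals I of L satisfying [I,α(q)] ⊆ L; that is, (L:q) is a Hom-ideal, [(L:q),α(q)] ⊆ L, and every Hom-ideal I of L with [I,α(q)] ⊆ L satisfies I ⊆ (L:q). -/
section Aux

variable {𝔽 Q : Type*} [Field 𝔽] [AddCommGroup Q] [Module 𝔽 Q]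
  (H : HomLieAlgebra 𝔽 Q)

/-- `[αx, w] = [x, αw]`. -/
lemma HomLieAlgebra.comm₃ (x w : Q) :
    H.bracket (H.alpha x) w = H.bracket x (H.alpha w) := by
  rw [← H.comm₁, H.comm₂]

/-- Reduce a statement about all of `wordSpan` to words. -/
lemma HomLieAlgebra.spanHelper (L : Submodule 𝔽 Q) (q z : Q)
    (h : ∀ p, H.IsWord L q p → H.bracket z (H.alpha p) ∈ L) :
    ∀ p ∈ H.wordSpan L q, H.bracket z (H.alpha p) ∈ L := by
  intro p hp
  have hle : H.wordSpan L q ≤ Submodule.comap ((H.bracket z).comp H.alpha) L :=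
    Submodule.span_le.mpr fun p hp => h p hp
  exact hle hp

lemma HomLieAlgebra.key_identity (x y p : Q) :
    H.bracket (H.bracket x y) (H.alpha p)
      = - H.bracket x (H.alpha (H.bracket p y)) - H.bracket y (H.bracket x (H.alpha p)) := by
  have j := H.jacobi x y p
  have t1 : H.bracket (H.alpha x) (H.bracket y p)
      = - H.bracket x (H.alpha (H.bracket p y)) := by
    rw [H.comm₃, H.skew y p, map_neg, map_neg]
  have t2 : H.bracket (H.alpha y) (H.bracket p x)
      = - H.bracket y (H.bracket x (H.alpha p)) := by
    rw [H.comm₃, H.skew p x, map_neg, map_neg, H.comm₂]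
  rw [t1, t2] at j
  rw [H.skew]
  abel_nf
  abel_nf at j
  linear_combination (norm := abel) -j

lemma HomLieAlgebra.key_identity2 (x p z : Q) :
    H.bracket x (H.alpha (H.bracket p z))
      = - H.bracket (H.bracket x z) (H.alpha p) - H.bracket z (H.bracket x (H.alpha p)) := by
  have j := H.jacobi x p z
  have t0 : H.bracket (H.alpha x) (H.bracket p z)
      = H.bracket x (H.alpha (H.bracket p z)) := H.comm₃ x _
  have t1 : H.bracket (H.alpha p) (H.bracket z x)
      = H.bracket (H.bracket x z) (H.alpha p) := by
    rw [H.skew z x, map_neg, ← H.skew]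
  have t2 : H.bracket (H.alpha z) (H.bracket x p)
      = H.bracket z (H.bracket x (H.alpha p)) := by
    rw [H.comm₃, H.comm₂]
  rw [t0, t1, t2] at j
  linear_combination (norm := abel) j

end Aux

/-- For an extension `L ⊆ Q` of Hom-Lie algebras and `q ∈ Q`, `(L : q)` is a Hom-ideal
of `L` with `[(L : q), α(q)] ⊆ L`, and it is the largest among Hom-ideals `I` of `L`
with `[I, α(q)] ⊆ L`. -/
theorem quotIdeal_isIdeal_and_maximal
    {𝔽 Q : Type*} [Field 𝔽] [AddCommGroup Q] [Module 𝔽 Q]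
    (H : HomLieAlgebra 𝔽 Q) (L : Submodule 𝔽 Q) (hL : H.IsSubalgebra L) (q : Q) :
    H.IsIdealOf L (H.quotIdeal L q) ∧
    (∀ x ∈ H.quotIdeal L q, H.bracket x (H.alpha q) ∈ L) ∧
    (∀ I : Submodule 𝔽 Q, H.IsIdealOf L I →
      (∀ x ∈ I, H.bracket x (H.alpha q) ∈ L) → I ≤ H.quotIdeal L q) := by
  have hq_word : q ∈ H.wordSpan L q := Submodule.subset_span HomLieAlgebra.IsWord.base
  refine ⟨⟨fun x hx => hx.1, ?_, ?_⟩, fun x hx => hx.2 q hq_word, ?_⟩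
  · -- α-stability
    rintro x ⟨hxL, hx⟩
    refine ⟨hL.1 x hxL, fun p hp => ?_⟩
    rw [← H.comm₁]
    exact hL.1 _ (hx p hp)
  · -- bracket closure
    rintro x ⟨hxL, hx⟩ y hyL
    refine ⟨hL.2 x hxL y hyL, H.spanHelper L q _ fun p hp => ?_⟩
    rw [H.key_identity]
    have h1 : H.bracket x (H.alpha (H.bracket p y)) ∈ L :=
      hx _ (Submodule.subset_span (hp.step y hyL))
    have h2 : H.bracket y (H.bracket x (H.alpha p)) ∈ L :=
      hL.2 y hyL _ (hx p (Submodule.subset_span hp))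
    exact L.sub_mem (L.neg_mem h1) h2
  · -- maximality
    intro I hI hIq x hxI
    have main : ∀ p, H.IsWord L q p → ∀ x ∈ I, H.bracket x (H.alpha p) ∈ L := by
      intro p hp
      induction hp with
      | base => exact hIq
      | @step p z hword hzL ih =>
        intro x hxI
        rw [H.key_identity2]
        have h1 : H.bracket (H.bracket x z) (H.alpha p) ∈ L :=
          ih _ (hI.2.2 x hxI z hzL)
        have h2 : H.bracket z (H.bracket x (H.alpha p)) ∈ L :=
          hL.2 z hzL _ (ih x hxI)
        exact L.sub_mem (L.neg_mem h1) h2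
    exact ⟨hI.1 hxI, H.spanHelper L q x fun p hp => main p hp x hxI⟩
end

section
/- Let L ⊆ Q be an extension of Hom-Lie algebras such that Q is a weak algebra of quotients of L. If I is a nonzero Hom-ideal of Q, then I ∩ L is a nonzero Hom-ideal of L. -/
/-- If `Q` is a weak algebra of quotients of its Hom-subalgebra `L` and `I` is a
nonzero Hom-ideal of `Q`, then `I ∩ L` is a nonzero Hom-ideal of `L`. -/
theorem inf_nonzero_ideal_of_weakQuotients
    {𝔽 Q : Type*} [Field 𝔽] [AddCommGroup Q] [Module 𝔽 Q]
    (H : HomLieAlgebra 𝔽 Q) (L : Submodule 𝔽 Q) (hL : H.IsSubalgebra L)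
    (hw : H.IsWeakAlgebraOfQuotients L)
    (I : Submodule 𝔽 Q) (hI : H.IsIdealOf ⊤ I) (hI0 : I ≠ ⊥) :
    H.IsIdealOf L (I ⊓ L) ∧ I ⊓ L ≠ ⊥ := by
  obtain ⟨hIle, hIa, hIb⟩ := hI
  constructor
  · refine ⟨inf_le_right, fun x hx => ⟨hIa x hx.1, hL.1 x hx.2⟩, fun x hx y hy => ?_⟩
    exact ⟨hIb x hx.1 y trivial, hL.2 x hx.2 y hy⟩
  · obtain ⟨q, hqI, hq0⟩ := Submodule.exists_mem_ne_zero_of_ne_bot hI0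
    obtain ⟨x, hxL, hne, hmem⟩ := hw q hq0
    intro hbot
    apply hne
    have h1 : H.bracket x (H.alpha q) ∈ I := by
      have : H.bracket (H.alpha q) x ∈ I := hIb _ (hIa q hqI) x trivial
      rw [H.skew]
      exact I.neg_mem this
    have : H.bracket x (H.alpha q) ∈ I ⊓ L := ⟨h1, hmem⟩
    rw [hbot] at this
    exact this
end

section
/- Let L ⊆ Q be an extension of Hom-Lie algebras such that Q is a weak algebra of quotients of L. If L is semiprime, then Q is semiprime; and if L is prime, then Q is prime. -/
/-- If `Q` is a weak algebra of quotients of its Hom-subalgebra `L`, then semiprimeness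
and primeness pass from `L` to `Q`. -/
theorem semiprime_and_prime_lift_of_weakQuotients
    {𝔽 Q : Type*} [Field 𝔽] [AddCommGroup Q] [Module 𝔽 Q]
    (H : HomLieAlgebra 𝔽 Q) (L : Submodule 𝔽 Q) (hL : H.IsSubalgebra L)
    (hw : H.IsWeakAlgebraOfQuotients L) :
    (H.IsSemiprimeOn L → H.IsSemiprimeOn ⊤) ∧ (H.IsPrimeOn L → H.IsPrimeOn ⊤) := by
  have key : ∀ I : Submodule 𝔽 Q, H.IsIdealOf ⊤ I → I ≠ ⊥ →
      H.IsIdealOf L (I ⊓ L) ∧ I ⊓ L ≠ ⊥ := by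
    intro I hI hIne
    obtain ⟨hIle, hIa, hIb⟩ := hI
    constructor
    · refine ⟨inf_le_right, ?_, ?_⟩
      · intro x hx
        rw [Submodule.mem_inf] at hx ⊢
        exact ⟨hIa x hx.1, hL.1 x hx.2⟩
      · intro x hx y hy
        rw [Submodule.mem_inf] at hx ⊢
        exact ⟨hIb x hx.1 y Submodule.mem_top, hL.2 x hx.2 y hy⟩
    · obtain ⟨q, hqI, hq0⟩ := (Submodule.ne_bot_iff I).mp hIne
      obtain ⟨x, hxL, hne, hmem⟩ := hw q hq0
      have hIn : H.bracket x (H.alpha q) ∈ I := by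
        rw [H.skew]
        exact I.neg_mem (hIb _ (hIa q hqI) x Submodule.mem_top)
      exact (Submodule.ne_bot_iff _).mpr ⟨_, Submodule.mem_inf.mpr ⟨hIn, hmem⟩, hne⟩
  constructor
  · intro hsp I hI hIne
    obtain ⟨hId, hne⟩ := key I hI hIne
    obtain ⟨x, hx, y, hy, hxy⟩ := hsp _ hId hne
    exact ⟨x, (Submodule.mem_inf.mp hx).1, y, (Submodule.mem_inf.mp hy).1, hxy⟩
  · intro hp I J hI hIne hJ hJne
    obtain ⟨hId, hne⟩ := key I hI hIne
    obtain ⟨hJd, hne'⟩ := key J hJ hJne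
    obtain ⟨x, hx, y, hy, hxy⟩ := hp _ _ hId hne hJd hne'
    exact ⟨x, (Submodule.mem_inf.mp hx).1, y, (Submodule.mem_inf.mp hy).1, hxy⟩
end

section
/- Let L ⊆ Q be an extension of Hom-Lie algebras such that Q is an algebra of quotients of L, and let q ∈ Q. Then (L:q) is an essential Hom-ideal of L and Ann_L((L:q)) = {0}. -/
section Aux

variable {𝔽 Q : Type*} [Field 𝔽] [AddCommGroup Q] [Module 𝔽 Q]
variable (H : HomLieAlgebra 𝔽 Q)

/-- `[α x, z] = [x, α z]`. -/
theorem aux_alpha_left (x z : Q) :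
    H.bracket (H.alpha x) z = H.bracket x (H.alpha z) := by
  rw [← H.comm₁, H.comm₂]

/-- `wordSpan` is stable under bracketing with elements of `L` on the right. -/
theorem aux_wordSpan_bracket (L : Submodule 𝔽 Q) (q : Q) {p x : Q}
    (hp : p ∈ H.wordSpan L q) (hx : x ∈ L) :
    H.bracket p x ∈ H.wordSpan L q := by
  induction hp using Submodule.span_induction with
  | mem w hw => exact Submodule.subset_span (HomLieAlgebra.IsWord.step x hw hx)
  | zero => simp [Submodule.zero_mem]
  | add a b _ _ ha hb =>
      rw [map_add, LinearMap.add_apply]; exact Submodule.add_mem _ ha hb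
  | smul c a _ ha =>
      rw [map_smul, LinearMap.smul_apply]; exact Submodule.smul_mem _ c ha

/-- Hom-Leibniz identity: `[[x,y], α p] = [x, α [y,p]] + [[x, α p], y]`. -/
theorem aux_leibniz (x y p : Q) :
    H.bracket (H.bracket x y) (H.alpha p) =
      H.bracket x (H.alpha (H.bracket y p)) +
        H.bracket (H.bracket x (H.alpha p)) y := by
  have J := H.jacobi x y p
  have hC : H.bracket (H.alpha p) (H.bracket x y) =
      -(H.bracket (H.alpha x) (H.bracket y p) +
        H.bracket (H.alpha y) (H.bracket p x)) :=
    by rw [eq_neg_iff_add_eq_zero, add_comm]; exact J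
  have h1 : H.bracket (H.alpha x) (H.bracket y p)
      = H.bracket x (H.alpha (H.bracket y p)) := aux_alpha_left H _ _
  have h2 : H.bracket (H.alpha y) (H.bracket p x)
      = H.bracket (H.bracket x (H.alpha p)) y := by
    rw [H.skew p x, map_neg, aux_alpha_left H y (H.bracket x p), H.comm₂ x p,
      H.skew y, neg_neg]
  rw [H.skew, hC, neg_neg, h1, h2]

/-- `(L : q)` is a Hom-ideal of `L`. -/
theorem aux_quotIdeal_isIdeal (L : Submodule 𝔽 Q) (hL : H.IsSubalgebra L) (q : Q) :
    H.IsIdealOf L (H.quotIdeal L q) := by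
  obtain ⟨hLα, hLb⟩ := hL
  refine ⟨fun x hx => hx.1, ?_, ?_⟩
  · rintro x ⟨hxL, hx⟩
    refine ⟨hLα x hxL, fun p hp => ?_⟩
    rw [aux_alpha_left H x (H.alpha p), ← H.comm₂]
    exact hLα _ (hx p hp)
  · rintro x ⟨hxL, hx⟩ y hyL
    refine ⟨hLb x hxL y hyL, fun p hp => ?_⟩
    rw [aux_leibniz]
    refine Submodule.add_mem _ ?_ (hLb _ (hx p hp) y hyL)
    have hyp : H.bracket y p ∈ H.wordSpan L q := by
      rw [H.skew y p]
      exact Submodule.neg_mem _ (aux_wordSpan_bracket H L q hp hyL)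
    exact hx _ hyp

end Aux

/-- If `Q` is an algebra of quotients of its Hom-subalgebra `L` and `q ∈ Q`, then
`(L : q)` is an essential Hom-ideal of `L` and `Ann_L((L : q)) = {0}`. -/
theorem quotIdeal_essential_of_isAlgebraOfQuotients
    {𝔽 Q : Type*} [Field 𝔽] [AddCommGroup Q] [Module 𝔽 Q]
    (H : HomLieAlgebra 𝔽 Q) (L : Submodule 𝔽 Q) (hL : H.IsSubalgebra L)
    (hq : H.IsAlgebraOfQuotients L) (q : Q) :
    H.IsEssentialIdealOf L (H.quotIdeal L q) ∧
    H.annIn L (H.quotIdeal L q : Set Q) = {0} := by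
  have hI : H.IsIdealOf L (H.quotIdeal L q) := aux_quotIdeal_isIdeal H L hL q
  constructor
  · refine ⟨hI, fun J hJ hJne => ?_⟩
    obtain ⟨j, hjJ, hjne⟩ := Submodule.exists_mem_ne_zero_of_ne_bot hJne
    obtain ⟨x, hxI, hxne⟩ := hq j q hjne
    intro hbot
    have hjL : j ∈ L := hJ.1 hjJ
    have hαj : H.alpha j ∈ J := hJ.2.1 j hjJ
    have hw1 : H.bracket x (H.alpha j) ∈ H.quotIdeal L q :=
      hI.2.2 x hxI (H.alpha j) (hJ.1 hαj)
    have hw2 : H.bracket x (H.alpha j) ∈ J := by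
      rw [H.skew]
      exact Submodule.neg_mem _ (hJ.2.2 (H.alpha j) hαj x (hI.1 hxI))
    have : H.bracket x (H.alpha j) ∈ H.quotIdeal L q ⊓ J := ⟨hw1, hw2⟩
    rw [hbot, Submodule.mem_bot] at this
    exact hxne this
  · ext x
    simp only [Set.mem_singleton_iff]
    constructor
    · rintro ⟨hxL, hx⟩
      by_contra hxne
      obtain ⟨z, hzI, hzne⟩ := hq x q hxne
      apply hzne
      rw [← H.comm₂, H.skew, map_neg, H.comm₂, hx z hzI, neg_zero]
    · rintro rfl
      exact ⟨L.zero_mem, fun y _ => by rw [map_zero, LinearMap.zero_apply]⟩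
end

section
/- Let L ⊆ Q be an extension of Hom-Lie algebras such that Q is ideally absorbed into L, and let q ∈ Q. Then (L:q) is an essential Hom-ideal of L and Ann_L((L:q)) = {0}. -/
namespace HomLieAlgebra

variable {𝔽 : Type*} [Field 𝔽] {Q : Type*} [AddCommGroup Q] [Module 𝔽 Q]
variable (H : HomLieAlgebra 𝔽 Q)

lemma bracket_alpha_left (x y : Q) :
    H.bracket (H.alpha x) y = H.bracket x (H.alpha y) := by
  rw [← H.comm₁, H.comm₂]

lemma bracket_alpha_skew (x y : Q) :
    H.bracket x (H.alpha y) = -(H.bracket y (H.alpha x)) := by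
  rw [← H.comm₂, ← H.comm₂, H.skew x y, map_neg]

lemma wordSpan_bracket_mem {L : Submodule 𝔽 Q} {q p : Q} (hp : p ∈ H.wordSpan L q)
    {y : Q} (hy : y ∈ L) : H.bracket p y ∈ H.wordSpan L q := by
  induction hp using Submodule.span_induction with
  | mem p hp => exact Submodule.subset_span (IsWord.step y hp hy)
  | zero => simpa using (H.wordSpan L q).zero_mem
  | add a b _ _ ha hb =>
      rw [map_add, LinearMap.add_apply]; exact add_mem ha hb
  | smul c a _ ha =>
      rw [map_smul, LinearMap.smul_apply]; exact Submodule.smul_mem _ c ha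

/-- `(L : q)` is a Hom-ideal of `L`. -/
lemma quotIdeal_isIdealOf (L : Submodule 𝔽 Q) (hL : H.IsSubalgebra L) (q : Q) :
    H.IsIdealOf L (H.quotIdeal L q) := by
  refine ⟨fun x hx => hx.1, ?_, ?_⟩
  · rintro x ⟨hxL, hx⟩
    refine ⟨hL.1 x hxL, fun p hp => ?_⟩
    rw [← H.comm₁]
    exact hL.1 _ (hx p hp)
  · rintro x ⟨hxL, hx⟩ y hyL
    refine ⟨hL.2 x hxL y hyL, fun p hp => ?_⟩
    have j := H.jacobi x y p
    have h1 : H.bracket (H.alpha x) (H.bracket y p)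
        = -(H.bracket x (H.alpha (H.bracket p y))) := by
      rw [H.skew y p, map_neg, H.bracket_alpha_left]
    have h2 : H.bracket (H.alpha y) (H.bracket p x)
        = -(H.bracket y (H.bracket x (H.alpha p))) := by
      rw [H.bracket_alpha_left, H.skew p x, map_neg, map_neg, H.comm₂]
    have key : H.bracket (H.bracket x y) (H.alpha p)
        = -(H.bracket x (H.alpha (H.bracket p y)))
          - H.bracket y (H.bracket x (H.alpha p)) := by
      rw [H.skew (H.bracket x y) (H.alpha p), eq_neg_of_add_eq_zero_right j, h1, h2]
      abel
    rw [key]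
    exact L.sub_mem (L.neg_mem (hx _ (H.wordSpan_bracket_mem hp hyL)))
      (hL.2 y hyL _ (hx p hp))

/-- Absorption lemma: an ideal bracketing `α(q)` into `L` sits inside `(L : q)`. -/
lemma ideal_le_quotIdeal {L I : Submodule 𝔽 Q} (hL : H.IsSubalgebra L)
    (hI : H.IsIdealOf L I) {q : Q}
    (hbase : ∀ x ∈ I, H.bracket x (H.alpha q) ∈ L) : I ≤ H.quotIdeal L q := by
  have key : ∀ p, H.IsWord L q p → ∀ x ∈ I, H.bracket x (H.alpha p) ∈ L := by
    intro p hp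
    induction hp with
    | base => exact hbase
    | @step p y hw hy ih =>
      intro x hx
      have j := H.jacobi p y x
      have h1 : H.bracket (H.alpha p) (H.bracket y x)
          = H.bracket (H.bracket x y) (H.alpha p) := by
        rw [H.skew (H.alpha p) (H.bracket y x), H.skew y x, map_neg,
          LinearMap.neg_apply, neg_neg]
      have h2 : H.bracket (H.alpha y) (H.bracket x p)
          = H.bracket y (H.bracket x (H.alpha p)) := by
        rw [H.bracket_alpha_left, H.comm₂]
      have key2 : H.bracket x (H.alpha (H.bracket p y))
          = -(H.bracket (H.bracket x y) (H.alpha p))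
            - H.bracket y (H.bracket x (H.alpha p)) := by
        rw [← H.bracket_alpha_left, eq_neg_of_add_eq_zero_right j, h1, h2]
        abel
      rw [key2]
      exact L.sub_mem (L.neg_mem (ih _ (hI.2.2 x hx y hy)))
        (hL.2 y hy _ (ih x hx))
  intro x hx
  refine ⟨hI.1 hx, fun p hp => ?_⟩
  induction hp using Submodule.span_induction with
  | mem p hp => exact key p hp x hx
  | zero => simpa using L.zero_mem
  | add a b _ _ ha hb => rw [map_add, map_add]; exact L.add_mem ha hb
  | smul c a _ ha => rw [map_smul, map_smul]; exact L.smul_mem c ha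

end HomLieAlgebra

/-- If `Q` is ideally absorbed into its Hom-subalgebra `L` and `q ∈ Q`, then
`(L : q)` is an essential Hom-ideal of `L` and `Ann_L((L : q)) = {0}`. -/
theorem quotIdeal_essential_of_isIdeallyAbsorbed
    {𝔽 Q : Type*} [Field 𝔽] [AddCommGroup Q] [Module 𝔽 Q]
    (H : HomLieAlgebra 𝔽 Q) (L : Submodule 𝔽 Q) (hL : H.IsSubalgebra L)
    (habs : H.IsIdeallyAbsorbed L) (q : Q) :
    H.IsEssentialIdealOf L (H.quotIdeal L q) ∧
    H.annIn L (H.quotIdeal L q : Set Q) = {0} := by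
  classical
  have hIdeal : H.IsIdealOf L (H.quotIdeal L q) := H.quotIdeal_isIdealOf L hL q
  by_cases hq : q = 0
  · -- trivial case: `(L : 0) = L`
    subst hq
    have hword : ∀ p, H.IsWord L (0 : Q) p → p = 0 := by
      intro p hp
      induction hp with
      | base => rfl
      | step x hw hx ih => rw [ih]; simp
    have hLle : L ≤ H.quotIdeal L 0 := by
      intro x hx
      refine ⟨hx, fun p hp => ?_⟩
      have hp0 : p = 0 := by
        have : p ∈ Submodule.span 𝔽 ({0} : Set Q) := by
          refine Submodule.span_le.2 ?_ hp
          intro z hz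
          have := hword z hz
          simp [this, Submodule.mem_span_singleton]
        simpa [Submodule.span_zero_singleton] using this
      rw [hp0]
      simpa using L.zero_mem
    have hEq : H.quotIdeal L 0 = L := le_antisymm (fun x hx => hx.1) hLle
    constructor
    · refine ⟨hIdeal, fun J hJ hJne => ?_⟩
      rw [hEq, inf_eq_right.mpr hJ.1]
      exact hJne
    · ext x
      simp only [Set.mem_singleton_iff]
      constructor
      · rintro ⟨hxL, hx⟩
        by_contra hx0
        obtain ⟨I, hI, hAnn, ⟨y, hyI, hy0⟩, -⟩ := habs x hx0
        have hyL : y ∈ L := hI.1 hyI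
        have : H.bracket x (H.alpha y) = 0 := hx y (hLle hyL)
        rw [H.bracket_alpha_skew, neg_eq_zero] at this
        exact hy0 this
      · rintro rfl
        exact ⟨L.zero_mem, fun y _ => by simp⟩
  · -- main case: use the absorbing ideal for `q`
    obtain ⟨I, hI, hAnn, ⟨y₀, hy₀I, hy₀⟩, habs'⟩ := habs q hq
    have hIle : I ≤ H.quotIdeal L q := H.ideal_le_quotIdeal hL hI habs'
    constructor
    · refine ⟨hIdeal, fun J hJ hJne => ?_⟩
      intro hbot
      apply hJne
      rw [Submodule.eq_bot_iff]
      intro j hj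
      have hjAnn : j ∈ H.annIn L (I : Set Q) := by
        refine ⟨hJ.1 hj, fun i hi => ?_⟩
        have hiI : i ∈ I := hi
        have hαi : H.alpha i ∈ I := hI.2.1 i hiI
        have h1 : H.bracket j (H.alpha i) ∈ J := hJ.2.2 j hj _ (hI.1 hαi)
        have h2 : H.bracket j (H.alpha i) ∈ I := by
          rw [H.skew j (H.alpha i)]
          exact I.neg_mem (hI.2.2 _ hαi j (hJ.1 hj))
        have : H.bracket j (H.alpha i) ∈ H.quotIdeal L q ⊓ J := ⟨hIle h2, h1⟩
        rw [hbot] at this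
        simpa using this
      rw [hAnn] at hjAnn
      exact hjAnn
    · ext x
      simp only [Set.mem_singleton_iff]
      constructor
      · rintro ⟨hxL, hx⟩
        have : x ∈ H.annIn L (I : Set Q) :=
          ⟨hxL, fun i hi => hx i (hIle hi)⟩
        rw [hAnn] at this
        exact this
      · rintro rfl
        exact ⟨L.zero_mem, fun y _ => by simp⟩
end

section
/- Let L ⊆ Q be an extension of Hom-Lie algebras such that Q is a weak algebra of quotients of L, and let I be a Hom-ideal of L with Ann_L(I) = {0}. Then there is no nonzero element x ∈ Q such that [α(x),I] = {0}. -/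
/-- If `Q` is a weak algebra of quotients of its Hom-subalgebra `L` and `I` is a
Hom-ideal of `L` with `Ann_L(I) = {0}`, then there is no nonzero `x ∈ Q` with
`[α(x), I] = {0}`. -/
theorem no_nonzero_alpha_annihilating_element
    {𝔽 Q : Type*} [Field 𝔽] [AddCommGroup Q] [Module 𝔽 Q]
    (H : HomLieAlgebra 𝔽 Q) (L : Submodule 𝔽 Q) (hL : H.IsSubalgebra L)
    (hw : H.IsWeakAlgebraOfQuotients L)
    (I : Submodule 𝔽 Q) (hI : H.IsIdealOf L I)
    (hann : H.annIn L (I : Set Q) = {0}) :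
    ¬ ∃ x : Q, x ≠ 0 ∧ ∀ y ∈ I, H.bracket (H.alpha x) y = 0 := by
  rintro ⟨x, hx0, hx⟩
  obtain ⟨z, hzL, hzx, hzxL⟩ := hw x hx0
  set w := H.bracket z (H.alpha x) with hw'
  have hwann : w ∈ H.annIn L (I : Set Q) := by
    refine ⟨hzxL, fun y hyI => ?_⟩
    have hj := H.jacobi y z (H.alpha x)
    have h1 : H.bracket (H.alpha z) (H.bracket (H.alpha x) y) = 0 := by
      rw [hx y hyI]; simp
    have h2 : H.bracket (H.alpha (H.alpha x)) (H.bracket y z) = 0 := by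
      rw [← H.comm₁]
      rw [hx _ (hI.2.2 y hyI z hzL)]
      simp
    rw [h1, h2, add_zero, add_zero] at hj
    rw [H.skew]
    rw [hj]
    simp
  rw [hann] at hwann
  exact hzx hwann
end

section
/- Let L ⊆ Q be an extension of Hom-Lie algebras such that Q is a weak algebra of quotients of L. Then for every Hom-ideal I of L, Ann_L(I) = {0} implies Ann_Q(I) = {0}, where Ann_Q(I) = {q ∈ Q : [q,α(y)] = 0 for all y ∈ I}. -/
/-- If `Q` is a weak algebra of quotients of its Hom-subalgebra `L`, then for every
Hom-ideal `I` of `L`, `Ann_L(I) = {0}` implies `Ann_Q(I) = {0}`. -/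
theorem annQ_eq_zero_of_annL_eq_zero
    {𝔽 Q : Type*} [Field 𝔽] [AddCommGroup Q] [Module 𝔽 Q]
    (H : HomLieAlgebra 𝔽 Q) (L : Submodule 𝔽 Q) (hL : H.IsSubalgebra L)
    (hw : H.IsWeakAlgebraOfQuotients L) :
    ∀ I : Submodule 𝔽 Q, H.IsIdealOf L I → H.annIn L (I : Set Q) = {0} →
      H.annIn ⊤ (I : Set Q) = {0} := by
  intro I hI hAnn
  ext q
  simp only [Set.mem_singleton_iff]
  constructor
  · rintro ⟨-, hq⟩
    by_contra hq0
    obtain ⟨x, hxL, hne, hpL⟩ := hw q hq0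
    have hpAnn : H.bracket x (H.alpha q) ∈ H.annIn L I := by
      refine ⟨hpL, fun y hy => ?_⟩
      have h1 : H.bracket (H.alpha q) y = 0 := by
        rw [← H.comm₁, H.comm₂, hq y hy]
      have hz : H.bracket y x ∈ I := hI.2.2 y hy x hxL
      have h2 : H.bracket (H.alpha (H.alpha q)) (H.bracket y x) = 0 := by
        rw [← H.comm₁, H.comm₂, ← H.comm₁, hq _ hz, map_zero]
      have j := H.jacobi y x (H.alpha q)
      rw [h1, h2, map_zero] at j
      simp only [add_zero] at j
      rw [H.skew, j, neg_zero]
    rw [hAnn] at hpAnn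
    exact hne hpAnn
  · rintro rfl
    exact ⟨Submodule.zero_mem _, fun y _ => by simp⟩
end

section
/- Let L be a Hom-Lie algebra with Ann(L) = {0} and let I be a Hom-ideal of L. Then Ann_L(I) = {0} if and only if rann_{A(L)}(A_L(I)) = {0}, where A(L) is the associative subalgebra of End(L) generated by {ad_x : x ∈ L}, A_L(I) is the associative subalgebra of A(L) generated by {ad_y : y ∈ I}, and rann_{A(L)}(A_L(I)) = {μ ∈ A(L) : νμ = 0 for all ν ∈ A_L(I)}. -/
/-- For a Hom-Lie algebra `L` with `Ann(L) = {0}` and a Hom-ideal `I` of `L`,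
`Ann_L(I) = {0}` iff `rann_{A(L)}(A_L(I)) = {0}`, where `A(L)` is the (possibly
non-unital) associative subalgebra of `End(L)` generated by the inner derivations
`ad_x` (`x ∈ L`) and `A_L(I)` the subalgebra generated by `ad_y` (`y ∈ I`). -/
theorem annL_eq_zero_iff_rann_eq_zero
    {𝔽 L : Type*} [Field 𝔽] [AddCommGroup L] [Module 𝔽 L]
    (H : HomLieAlgebra 𝔽 L) (hann : H.annIn ⊤ (Set.univ : Set L) = {0})
    (I : Submodule 𝔽 L) (hI : H.IsIdealOf ⊤ I) :
    H.annIn ⊤ (I : Set L) = {0} ↔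
      {μ : Module.End 𝔽 L | μ ∈ NonUnitalAlgebra.adjoin 𝔽 (Set.range H.ad) ∧
        ∀ ν ∈ NonUnitalAlgebra.adjoin 𝔽 (H.ad '' (I : Set L)), ν * μ = 0} = {0} := by
  constructor
  · intro hA
    ext μ
    simp only [Set.mem_setOf_eq, Set.mem_singleton_iff]
    constructor
    · rintro ⟨hμ, hr⟩
      ext z
      have hz : μ z ∈ H.annIn ⊤ (I : Set L) := by
        refine ⟨trivial, fun y hy => ?_⟩
        have h0 : H.ad y * μ = 0 :=
          hr _ (NonUnitalAlgebra.subset_adjoin 𝔽 (Set.mem_image_of_mem _ hy))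
        have h1 : H.bracket (H.alpha y) (μ z) = 0 := by
          have := congrFun (congrArg DFunLike.coe h0) z
          simpa [HomLieAlgebra.ad, Module.End.mul_apply] using this
        rw [H.skew, h1, neg_zero]
      rw [hA] at hz
      simpa using hz
    · rintro rfl
      exact ⟨zero_mem _, fun ν _ => mul_zero ν⟩
  · intro hr
    ext x
    simp only [HomLieAlgebra.annIn, Set.mem_setOf_eq, Set.mem_singleton_iff]
    constructor
    · rintro ⟨-, hx⟩
      have key : ∀ y ∈ I, H.ad y * H.ad x = 0 := by
        intro y hy
        ext z
        simp only [Module.End.mul_apply, HomLieAlgebra.ad, LinearMap.zero_apply]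
        have h1 : H.bracket z y ∈ I := by
          rw [H.skew]
          exact I.neg_mem (hI.2.2 y hy z trivial)
        have e1 : H.bracket (H.alpha x) (H.bracket z y) = 0 := by
          rw [← H.comm₁, H.comm₂]
          exact hx _ h1
        have e2 : H.alpha (H.bracket y x) = 0 := by
          rw [H.comm₁, H.skew, hx y hy, neg_zero]
        have jac := H.jacobi y x z
        rw [e1, add_zero] at jac
        have e3 : H.bracket (H.alpha y) (H.bracket x z)
            = - H.bracket (H.alpha z) (H.bracket y x) :=
          eq_neg_of_add_eq_zero_left jac
        rw [← H.comm₁ x z, ← H.comm₂, e3, map_neg, H.comm₂, e2, map_zero, neg_zero]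
      have hmem : H.ad x ∈ ({μ : Module.End 𝔽 L |
          μ ∈ NonUnitalAlgebra.adjoin 𝔽 (Set.range H.ad) ∧
          ∀ ν ∈ NonUnitalAlgebra.adjoin 𝔽 (H.ad '' (I : Set L)), ν * μ = 0} : Set _) := by
        refine ⟨NonUnitalAlgebra.subset_adjoin 𝔽 ⟨x, rfl⟩, ?_⟩
        intro ν hν
        induction hν using NonUnitalAlgebra.adjoin_induction with
        | mem w hw =>
          obtain ⟨y, hy, rfl⟩ := hw
          exact key y hy
        | add a b _ _ ha hb => rw [add_mul, ha, hb, add_zero]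
        | zero => rw [zero_mul]
        | mul a b _ hb _ hb' => rw [mul_assoc, hb', mul_zero]
        | smul r a _ ha => rw [smul_mul_assoc, ha, smul_zero]
      rw [hr] at hmem
      have hadx : H.ad x = 0 := hmem
      have hx0 : x ∈ H.annIn ⊤ (Set.univ : Set L) := by
        refine ⟨trivial, fun y _ => ?_⟩
        have := congrFun (congrArg DFunLike.coe hadx) y
        simp only [HomLieAlgebra.ad, LinearMap.zero_apply] at this
        rw [← H.comm₂, H.comm₁]
        exact this
      rw [hann] at hx0
      exact hx0
    · rintro rfl
      refine ⟨trivial, fun y _ => ?_⟩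
      simp
end

section
/- Let L ⊆ Q be an extension of Hom-Lie algebras such that Q is a weak algebra of quotients of L, and let I be a Hom-ideal of L with Ann_L(I) = {0}. Then rann_{A(Q)}(A_Q(I)) = {0}, where A(Q) is the associative subalgebra of End(Q) generated by {ad_q : q ∈ Q}, A_Q(I) is the subalgebra of A(Q) generated by {ad_y : y ∈ I}, and rann_{A(Q)}(A_Q(I)) = {μ ∈ A(Q) : νμ = 0 for all ν ∈ A_Q(I)}. -/
/-- If `Q` is a weak algebra of quotients of its Hom-subalgebra `L` and `I` is a
Hom-ideal of `L` with `Ann_L(I) = {0}`, then `rann_{A(Q)}(A_Q(I)) = {0}`, where `A(Q)`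
is the (possibly non-unital) associative subalgebra of `End(Q)` generated by the inner
derivations `ad_q` (`q ∈ Q`) and `A_Q(I)` the subalgebra generated by `ad_y` (`y ∈ I`). -/
theorem rann_eq_zero_of_weakQuotients
    {𝔽 Q : Type*} [Field 𝔽] [AddCommGroup Q] [Module 𝔽 Q]
    (H : HomLieAlgebra 𝔽 Q) (L : Submodule 𝔽 Q) (hL : H.IsSubalgebra L)
    (hw : H.IsWeakAlgebraOfQuotients L)
    (I : Submodule 𝔽 Q) (hI : H.IsIdealOf L I)
    (hann : H.annIn L (I : Set Q) = {0}) :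
    {μ : Module.End 𝔽 Q | μ ∈ NonUnitalAlgebra.adjoin 𝔽 (Set.range H.ad) ∧
      ∀ ν ∈ NonUnitalAlgebra.adjoin 𝔽 (H.ad '' (I : Set Q)), ν * μ = 0} = {0} := by

  ext μ
  simp only [Set.mem_setOf_eq, Set.mem_singleton_iff]
  constructor
  · rintro ⟨hμA, hν⟩
    by_contra hμ0
    have hex : ∃ p, μ p ≠ 0 := by
      by_contra h
      push_neg at h
      exact hμ0 (LinearMap.ext fun p => h p)
    obtain ⟨p, hp⟩ := hex
    have hzero : ∀ w ∈ I, ∀ q : Q, H.bracket (H.alpha w) (μ q) = 0 := by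
      intro w hw q
      have hmem : H.ad w ∈ NonUnitalAlgebra.adjoin 𝔽 (H.ad '' (I : Set Q)) :=
        NonUnitalAlgebra.subset_adjoin 𝔽 ⟨w, hw, rfl⟩
      have := hν (H.ad w) hmem
      have := LinearMap.ext_iff.mp this q
      simpa [HomLieAlgebra.ad] using this
    obtain ⟨x, hxL, hzne, hzL⟩ := hw (μ p) hp
    set r : Q := μ p with hr
    set z : Q := H.bracket x (H.alpha r) with hz
    have hzann : ∀ y ∈ I, H.bracket z (H.alpha y) = 0 := by
      intro y hy
      have hj := H.jacobi y x (H.alpha r)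
      -- second term vanishes
      have hB : H.bracket (H.alpha x) (H.bracket (H.alpha r) y) = 0 := by
        have h1 : H.bracket (H.alpha r) y = H.bracket r (H.alpha y) := by
          rw [← H.comm₁, H.comm₂]
        have h2 : H.bracket r (H.alpha y) = 0 := by
          rw [H.skew]
          have : H.bracket (H.alpha y) r = 0 := hzero y hy p
          rw [this, neg_zero]
        rw [h1, h2, map_zero]
      -- third term vanishes
      have hC : H.bracket (H.alpha (H.alpha r)) (H.bracket y x) = 0 := by
        set w : Q := H.bracket y x with hwdef
        have hwI : w ∈ I := hI.2.2 y hy x hxL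
        have hαwI : H.alpha w ∈ I := hI.2.1 w hwI
        have h1 : H.bracket (H.alpha (H.alpha r)) w = H.bracket (H.alpha r) (H.alpha w) := by
          rw [← H.comm₁, H.comm₂]
        have h2 : H.bracket (H.alpha r) (H.alpha w) = 0 := by
          rw [H.skew]
          have h3 : H.bracket (H.alpha w) (H.alpha r) = H.bracket (H.alpha (H.alpha w)) r := by
            rw [← H.comm₂, H.comm₁]
          rw [h3, hzero (H.alpha w) hαwI p, neg_zero]
        rw [h1, h2]
      rw [hB, hC, add_zero, add_zero] at hj
      rw [H.skew, hj, neg_zero]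
    have hzmem : z ∈ H.annIn L (I : Set Q) := ⟨hzL, hzann⟩
    rw [hann] at hzmem
    exact hzne hzmem
  · rintro rfl
    exact ⟨zero_mem _, fun ν _ => mul_zero ν⟩
end

section
/- Let L be a semiprime Hom-Lie algebra and let I be a Hom-ideal of L with Ann_L(I) = {0}. Then Ann_L(I^s) = {0} for every s ≥ 1, where I¹ = I and I^k = [I^{k-1}, α(I)] (the span of such brackets) for k ≥ 2. Moreover, any finite intersection of Hom-ideals of L with zero α-annihilator also has zero α-annihilator. -/
/-- The powers of a Hom-ideal: `idealPow H I 0 = I¹ = I` and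
`idealPow H I k = I^{k+1} = [I^k, α(I)]` (the span of such brackets). -/
def idealPow {𝔽 L : Type*} [Field 𝔽] [AddCommGroup L] [Module 𝔽 L]
    (H : HomLieAlgebra 𝔽 L) (I : Submodule 𝔽 L) : ℕ → Submodule 𝔽 L
  | 0 => I
  | k + 1 => Submodule.span 𝔽
      {z | ∃ a ∈ idealPow H I k, ∃ b ∈ I, z = H.bracket a (H.alpha b)}


section Aux

variable {𝔽 Q : Type*} [Field 𝔽] [AddCommGroup Q] [Module 𝔽 Q] (H : HomLieAlgebra 𝔽 Q)

lemma hla_comm3 (x y : Q) : H.bracket (H.alpha x) y = H.bracket x (H.alpha y) :=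
  (H.comm₁ x y).symm.trans (H.comm₂ x y)

lemma hla_key (a b z : Q) :
    H.bracket (H.bracket a (H.alpha b)) z
      = H.bracket a (H.alpha (H.bracket b z)) + H.bracket (H.bracket a z) (H.alpha b) := by
  have j := H.jacobi z a b
  have h1 : H.bracket (H.bracket a (H.alpha b)) z
      = - H.bracket (H.alpha z) (H.bracket a b) := by
    rw [← H.comm₂ a b, hla_comm3, H.skew]
  have h2 : H.bracket a (H.alpha (H.bracket b z)) = H.bracket (H.alpha a) (H.bracket b z) :=
    (hla_comm3 H a _).symm
  have h3 : H.bracket (H.bracket a z) (H.alpha b) = H.bracket (H.alpha b) (H.bracket z a) := by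
    rw [H.skew (H.bracket a z) (H.alpha b), H.skew a z, map_neg, neg_neg]
  rw [h1, h2, h3, neg_eq_iff_add_eq_zero, ← add_assoc]
  exact j

/-- The α-annihilator of a submodule, as a submodule. -/
def hlaAnn (S : Submodule 𝔽 Q) : Submodule 𝔽 Q where
  carrier := {x | ∀ y ∈ S, H.bracket x (H.alpha y) = 0}
  add_mem' := by
    intro a b ha hb y hy
    rw [map_add, LinearMap.add_apply, ha y hy, hb y hy, add_zero]
  zero_mem' := by intro y hy; simp
  smul_mem' := by
    intro c a ha y hy
    rw [map_smul, LinearMap.smul_apply, ha y hy, smul_zero]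

lemma hlaAnn_isIdeal {S : Submodule 𝔽 Q} (hS : H.IsIdealOf ⊤ S) :
    H.IsIdealOf ⊤ (hlaAnn H S) := by
  refine ⟨le_top, ?_, ?_⟩
  · intro x hx y hy
    rw [← H.comm₁, hx y hy, map_zero]
  · intro x hx z _ y hy
    have hk := hla_key H x y z
    have h1 : H.bracket x (H.alpha (H.bracket y z)) = 0 :=
      hx _ (hS.2.2 y hy z Submodule.mem_top)
    rw [hx y hy, h1, zero_add] at hk
    simpa using hk.symm

/-- Span of brackets `[a, α b]`, `a ∈ J`, `b ∈ K`. -/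
def hlaBSpan (J K : Submodule 𝔽 Q) : Submodule 𝔽 Q :=
  Submodule.span 𝔽 {z | ∃ a ∈ J, ∃ b ∈ K, z = H.bracket a (H.alpha b)}

lemma hlaBSpan_isIdeal {J K : Submodule 𝔽 Q} (hJ : H.IsIdealOf ⊤ J)
    (hK : H.IsIdealOf ⊤ K) : H.IsIdealOf ⊤ (hlaBSpan H J K) := by
  refine ⟨le_top, ?_, ?_⟩
  · intro x hx
    have hle : Submodule.span 𝔽 {z | ∃ a ∈ J, ∃ b ∈ K, z = H.bracket a (H.alpha b)}
        ≤ Submodule.comap H.alpha (hlaBSpan H J K) := by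
      rw [Submodule.span_le]
      rintro w ⟨a, ha, b, hb, rfl⟩
      simp only [Set.mem_preimage, SetLike.mem_coe, Submodule.mem_comap]
      rw [H.comm₁]
      exact Submodule.subset_span ⟨H.alpha a, hJ.2.1 a ha, b, hb, rfl⟩
    exact hle hx
  · intro x hx z _
    have hle : Submodule.span 𝔽 {z' | ∃ a ∈ J, ∃ b ∈ K, z' = H.bracket a (H.alpha b)}
        ≤ Submodule.comap (H.bracket.flip z) (hlaBSpan H J K) := by
      rw [Submodule.span_le]
      rintro w ⟨a, ha, b, hb, rfl⟩
      simp only [Set.mem_preimage, SetLike.mem_coe, Submodule.mem_comap, LinearMap.flip_apply]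
      rw [hla_key H]
      refine Submodule.add_mem _ ?_ ?_
      · exact Submodule.subset_span ⟨a, ha, H.bracket b z,
          hK.2.2 b hb z Submodule.mem_top, rfl⟩
      · exact Submodule.subset_span ⟨H.bracket a z,
          hJ.2.2 a ha z Submodule.mem_top, b, hb, rfl⟩
    exact hle hx

lemma hlaBSpan_le_inf {J K : Submodule 𝔽 Q} (hJ : H.IsIdealOf ⊤ J)
    (hK : H.IsIdealOf ⊤ K) : hlaBSpan H J K ≤ J ⊓ K := by
  rw [hlaBSpan, Submodule.span_le]
  rintro w ⟨a, ha, b, hb, rfl⟩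
  refine Submodule.mem_inf.mpr ⟨hJ.2.2 a ha _ Submodule.mem_top, ?_⟩
  rw [H.skew]
  exact K.neg_mem (hK.2.2 _ (hK.2.1 b hb) a Submodule.mem_top)

lemma hla_inf_isIdeal {J K : Submodule 𝔽 Q} (hJ : H.IsIdealOf ⊤ J)
    (hK : H.IsIdealOf ⊤ K) : H.IsIdealOf ⊤ (J ⊓ K) := by
  refine ⟨le_top, ?_, ?_⟩
  · intro x hx
    have h := Submodule.mem_inf.mp hx
    exact Submodule.mem_inf.mpr ⟨hJ.2.1 x h.1, hK.2.1 x h.2⟩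
  · intro x hx y hy
    have h := Submodule.mem_inf.mp hx
    exact Submodule.mem_inf.mpr ⟨hJ.2.2 x h.1 y hy, hK.2.2 x h.2 y hy⟩

lemma hla_iInf_isIdeal {n : ℕ} {f : Fin n → Submodule 𝔽 Q}
    (hf : ∀ i, H.IsIdealOf ⊤ (f i)) : H.IsIdealOf ⊤ (⨅ i, f i) := by
  refine ⟨le_top, ?_, ?_⟩
  · intro x hx
    rw [Submodule.mem_iInf] at hx ⊢
    exact fun i => (hf i).2.1 x (hx i)
  · intro x hx y hy
    rw [Submodule.mem_iInf] at hx ⊢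
    exact fun i => (hf i).2.2 x (hx i) y hy

lemma hla_eq_bot_of_self_ann (hsp : H.IsSemiprimeOn ⊤) {K : Submodule 𝔽 Q}
    (hK : H.IsIdealOf ⊤ K)
    (h : ∀ x ∈ K, ∀ y ∈ K, H.bracket x (H.alpha y) = 0) : K = ⊥ := by
  by_contra hne
  obtain ⟨x, hx, y, hy, hxy⟩ := hsp K hK hne
  exact hxy (h x hx y hy)

lemma hla_annZero_bSpan (hsp : H.IsSemiprimeOn ⊤) {J K : Submodule 𝔽 Q}
    (hJ : H.IsIdealOf ⊤ J) (hK : H.IsIdealOf ⊤ K)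
    (hJ0 : ∀ x : Q, (∀ y ∈ J, H.bracket x (H.alpha y) = 0) → x = 0)
    (hK0 : ∀ x : Q, (∀ y ∈ K, H.bracket x (H.alpha y) = 0) → x = 0) :
    ∀ x : Q, (∀ y ∈ hlaBSpan H J K, H.bracket x (H.alpha y) = 0) → x = 0 := by
  intro x hx
  have hxA : x ∈ hlaAnn H (hlaBSpan H J K) := hx
  have hPid := hlaBSpan_isIdeal H hJ hK
  have hAid := hlaAnn_isIdeal H hPid
  have hbot : hlaAnn H (hlaBSpan H J K) ⊓ hlaBSpan H J K = ⊥ := by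
    refine hla_eq_bot_of_self_ann H hsp (hla_inf_isIdeal H hAid hPid) ?_
    intro u hu v hv
    exact (Submodule.mem_inf.mp hu).1 v (Submodule.mem_inf.mp hv).2
  apply hJ0
  intro a ha
  apply hK0
  intro b hb
  have hwA : H.bracket x (H.alpha a) ∈ hlaAnn H (hlaBSpan H J K) :=
    hAid.2.2 x hxA (H.alpha a) Submodule.mem_top
  have hwJ : H.bracket x (H.alpha a) ∈ J := by
    rw [H.skew]
    exact J.neg_mem (hJ.2.2 _ (hJ.2.1 a ha) x Submodule.mem_top)
  have hgen : H.bracket (H.bracket x (H.alpha a)) (H.alpha b) ∈ hlaBSpan H J K :=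
    Submodule.subset_span ⟨_, hwJ, b, hb, rfl⟩
  have hA2 : H.bracket (H.bracket x (H.alpha a)) (H.alpha b)
      ∈ hlaAnn H (hlaBSpan H J K) :=
    hAid.2.2 _ hwA (H.alpha b) Submodule.mem_top
  have hmem := Submodule.mem_inf.mpr ⟨hA2, hgen⟩
  rw [hbot] at hmem
  simpa using hmem

lemma hla_annIn_top_iff (S : Set Q) :
    H.annIn ⊤ S = {0} ↔ ∀ x : Q, (∀ y ∈ S, H.bracket x (H.alpha y) = 0) → x = 0 := by
  constructor
  · intro h x hx
    have hm : x ∈ H.annIn ⊤ S := ⟨Submodule.mem_top, hx⟩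
    rw [h] at hm
    exact hm
  · intro h
    ext x
    simp only [HomLieAlgebra.annIn, Set.mem_setOf_eq, Set.mem_singleton_iff,
      Submodule.mem_top, true_and]
    constructor
    · exact h x
    · rintro rfl
      intro y hy
      simp

end Aux

/-- In a semiprime Hom-Lie algebra `L`: if a Hom-ideal `I` has `Ann_L(I) = {0}`,
then `Ann_L(I^s) = {0}` for all `s ≥ 1`; moreover any finite intersection of
Hom-ideals with zero α-annihilator has zero α-annihilator. -/
theorem ann_of_powers_and_finite_intersections
    {𝔽 L : Type*} [Field 𝔽] [AddCommGroup L] [Module 𝔽 L]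
    (H : HomLieAlgebra 𝔽 L) (hsp : H.IsSemiprimeOn ⊤)
    (I : Submodule 𝔽 L) (hI : H.IsIdealOf ⊤ I)
    (hann : H.annIn ⊤ (I : Set L) = {0}) :
    (∀ s : ℕ, H.annIn ⊤ ((idealPow H I s : Submodule 𝔽 L) : Set L) = {0}) ∧
    (∀ (n : ℕ) (f : Fin n → Submodule 𝔽 L),
      (∀ i, H.IsIdealOf ⊤ (f i)) → (∀ i, H.annIn ⊤ ((f i : Submodule 𝔽 L) : Set L) = {0}) →
      H.annIn ⊤ (((⨅ i, f i) : Submodule 𝔽 L) : Set L) = {0}) := by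
  
  rw [hla_annIn_top_iff] at hann
  have hannZero_inf : ∀ {J K : Submodule 𝔽 L}, H.IsIdealOf ⊤ J → H.IsIdealOf ⊤ K →
      (∀ x : L, (∀ y ∈ J, H.bracket x (H.alpha y) = 0) → x = 0) →
      (∀ x : L, (∀ y ∈ K, H.bracket x (H.alpha y) = 0) → x = 0) →
      ∀ x : L, (∀ y ∈ J ⊓ K, H.bracket x (H.alpha y) = 0) → x = 0 := by
    intro J K hJ hK hJ0 hK0 x hx
    refine hla_annZero_bSpan H hsp hJ hK hJ0 hK0 x ?_
    intro y hy
    exact hx y (hlaBSpan_le_inf H hJ hK hy)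
  constructor
  · have main : ∀ s : ℕ, H.IsIdealOf ⊤ (idealPow H I s) ∧
        (∀ x : L, (∀ y ∈ idealPow H I s, H.bracket x (H.alpha y) = 0) → x = 0) := by
      intro s
      induction s with
      | zero => exact ⟨hI, hann⟩
      | succ k ih =>
        have heq : idealPow H I (k + 1) = hlaBSpan H (idealPow H I k) I := rfl
        rw [heq]
        exact ⟨hlaBSpan_isIdeal H ih.1 hI, hla_annZero_bSpan H hsp ih.1 hI ih.2 hann⟩
    intro s
    rw [hla_annIn_top_iff]
    exact (main s).2
  · intro n
    induction n with
    | zero =>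
      intro f _ _
      rw [hla_annIn_top_iff]
      intro x hx
      exact hann x fun y _ => hx y (by simp)
    | succ m ih =>
      intro f hfI hf0
      have hsplit : (⨅ i, f i) = f 0 ⊓ ⨅ i : Fin m, f i.succ := by
        apply le_antisymm
        · exact le_inf (iInf_le _ 0) (le_iInf fun i => iInf_le _ i.succ)
        · refine le_iInf fun i => Fin.cases ?_ (fun j => ?_) i
          · exact inf_le_left
          · exact inf_le_right.trans (iInf_le _ j)
      have htail := ih (fun i => f i.succ) (fun i => hfI i.succ) (fun i => hf0 i.succ)
      rw [hla_annIn_top_iff] at htail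
      rw [hla_annIn_top_iff, hsplit]
      exact hannZero_inf (hfI 0) (hla_iInf_isIdeal H fun i => hfI i.succ)
        ((hla_annIn_top_iff H _).mp (hf0 0)) htail
end
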